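/- If (σ*, τ*) is a mixed Nash equilibrium of the restricted game on nonempty subsets Π_r ⊆ ι, Π_c ⊆ κ, and a full-game best response to τ* already lies in Π_r (i.e., max over i in ι of ∑ j, τ* j * U i j = max over i in Π_r of ∑ j, τ* j * U i j) and a full-game best response to σ* already lies in Π_c (i.e., min over j in κ of ∑ i, σ* i * U i j = min over j in Π_c of ∑ i, σ* i * U i j), then (σ*, τ*) is a mixed Nash equilibrium of the full game. -/

import Mathlib

open Finset

/-- Expected payoff of the matrix game `U` under mixed strategies `σ` and `τ`. -/
def pay {ι κ : Type*} [Fintype ι] [Fintype κ] (U : ι → κ → ℝ) (σ : ι → ℝ) (τ : κ → ℝ) : ℝ :=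
  ∑ i, ∑ j, σ i * τ j * U i j

/-- `(σ, τ)` is a mixed Nash equilibrium of the zero-sum matrix game `U`. -/
def isNE {ι κ : Type*} [Fintype ι] [Fintype κ] (U : ι → κ → ℝ) (σ : ι → ℝ) (τ : κ → ℝ) : Prop :=
  σ ∈ stdSimplex ℝ ι ∧ τ ∈ stdSimplex ℝ κ ∧
    (∀ σ' ∈ stdSimplex ℝ ι, pay U σ' τ ≤ pay U σ τ) ∧
    (∀ τ' ∈ stdSimplex ℝ κ, pay U σ τ ≤ pay U σ τ')

lemma pay_row {ι κ : Type*} [Fintype ι] [Fintype κ] (U : ι → κ → ℝ) (σ : ι → ℝ) (τ : κ → ℝ) :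
    pay U σ τ = ∑ i, σ i * ∑ j, τ j * U i j := by
  simp [pay, Finset.mul_sum, mul_assoc]

lemma pay_col {ι κ : Type*} [Fintype ι] [Fintype κ] (U : ι → κ → ℝ) (σ : ι → ℝ) (τ : κ → ℝ) :
    pay U σ τ = ∑ j, τ j * ∑ i, σ i * U i j := by
  rw [pay, Finset.sum_comm]
  simp only [Finset.mul_sum]
  congr 1; ext j; congr 1; ext i; ring

lemma dirac_mem {ι : Type*} [Fintype ι] [DecidableEq ι] (i0 : ι) :
    (fun i => if i = i0 then (1:ℝ) else 0) ∈ stdSimplex ℝ ι := by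
  constructor
  · intro i; dsimp; split <;> norm_num
  · simp

/-- Classical termination guarantee of the double oracle algorithm (McMahan et al.): if
`(σ*, τ*)` is a mixed Nash equilibrium of the restricted game on `Pr`, `Pc` and the
full-game best responses to `τ*` and `σ*` already lie in `Pr` and `Pc` respectively, then
`(σ*, τ*)` is a mixed Nash equilibrium of the full game. -/
theorem double_oracle_no_new_best_response {ι κ : Type*}
    [Fintype ι] [Fintype κ] [Nonempty ι] [Nonempty κ] (U : ι → κ → ℝ)
    (Pr : Finset ι) (Pc : Finset κ) (hr : Pr.Nonempty) (hc : Pc.Nonempty)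
    (σs : ι → ℝ) (τs : κ → ℝ)
    (hσ : σs ∈ stdSimplex ℝ ι) (hτ : τs ∈ stdSimplex ℝ κ)
    (hσsupp : ∀ i ∉ Pr, σs i = 0) (hτsupp : ∀ j ∉ Pc, τs j = 0)
    (hRestrNE_r : ∀ σ ∈ stdSimplex ℝ ι, (∀ i ∉ Pr, σ i = 0) → pay U σ τs ≤ pay U σs τs)
    (hRestrNE_c : ∀ τ ∈ stdSimplex ℝ κ, (∀ j ∉ Pc, τ j = 0) → pay U σs τs ≤ pay U σs τ)
    (hBR_r : Finset.univ.sup' Finset.univ_nonempty (fun i => ∑ j, τs j * U i j) =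
      Pr.sup' hr (fun i => ∑ j, τs j * U i j))
    (hBR_c : Finset.univ.inf' Finset.univ_nonempty (fun j => ∑ i, σs i * U i j) =
      Pc.inf' hc (fun j => ∑ i, σs i * U i j)) :
    isNE U σs τs := by
  classical
  refine ⟨hσ, hτ, ?_, ?_⟩
  · intro σ' hσ'
    set g : ι → ℝ := fun i => ∑ j, τs j * U i j with hg
    set M : ℝ := Finset.univ.sup' Finset.univ_nonempty g with hM
    have h1 : pay U σ' τs ≤ M := by
      rw [pay_row]
      calc ∑ i, σ' i * g i ≤ ∑ i, σ' i * M := by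
            refine Finset.sum_le_sum fun i _ => ?_
            exact mul_le_mul_of_nonneg_left (Finset.le_sup' g (Finset.mem_univ i)) (hσ'.1 i)
        _ = M := by rw [← Finset.sum_mul, hσ'.2, one_mul]
    obtain ⟨i0, hi0, hi0eq⟩ := Finset.exists_mem_eq_sup' hr g
    have h2 : M ≤ pay U σs τs := by
      have hδ := dirac_mem (ι := ι) i0
      have hsupp : ∀ i ∉ Pr, (if i = i0 then (1:ℝ) else 0) = 0 := by
        intro i hi
        have : i ≠ i0 := fun h => hi (h ▸ hi0)
        simp [this]
      have := hRestrNE_r _ hδ hsupp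
      have hpay : pay U (fun i => if i = i0 then (1:ℝ) else 0) τs = g i0 := by
        rw [pay_row]
        simp [ite_mul]
        rfl
      show M ≤ _
      rw [hBR_r, hi0eq]
      rw [hpay] at this
      exact this
    exact h1.trans h2
  · intro τ' hτ'
    set h : κ → ℝ := fun j => ∑ i, σs i * U i j with hh
    set m : ℝ := Finset.univ.inf' Finset.univ_nonempty h with hm
    have h1 : m ≤ pay U σs τ' := by
      rw [pay_col]
      calc m = ∑ j, τ' j * m := by rw [← Finset.sum_mul, hτ'.2, one_mul]
        _ ≤ ∑ j, τ' j * h j := by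
            refine Finset.sum_le_sum fun j _ => ?_
            exact mul_le_mul_of_nonneg_left (Finset.inf'_le h (Finset.mem_univ j)) (hτ'.1 j)
    obtain ⟨j0, hj0, hj0eq⟩ := Finset.exists_mem_eq_inf' hc h
    have h2 : pay U σs τs ≤ m := by
      have hδ := dirac_mem (ι := κ) j0
      have hsupp : ∀ j ∉ Pc, (if j = j0 then (1:ℝ) else 0) = 0 := by
        intro j hj
        have : j ≠ j0 := fun h => hj (h ▸ hj0)
        simp [this]
      have := hRestrNE_c _ hδ hsupp
      have hpay : pay U σs (fun j => if j = j0 then (1:ℝ) else 0) = h j0 := by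
        rw [pay_col]
        simp [ite_mul]
        rfl
      show _ ≤ m
      rw [hBR_c, hj0eq]
      rw [hpay] at this
      exact this
    exact h2.trans h1
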